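/- arXiv:2604.00338 — 2 statements merged into one kernel-verified Lean document; each statement's English description precedes it below -/
import Mathlib

section
/- For each experiment i = 0, …, N_t−1 and each row index r = 1, …, d, let h_r^{(i)} ∈ ℝ^{N_c} be deterministic rows and let h̃_r^{(i)} = h_r^{(i)} + η_r^{(i)} be noisy rows, where every entry of every noise vector η_r^{(i)} has expectation m₁ and second moment m₂, and for r ≠ s the entries η_{r,k}^{(i)} and η_{s,k}^{(i)} are independent for each coordinate k. Define the true aggregate matrix M_𝒟 with entries (M_𝒟)_{(r,s)} := (1/N_t) Σ_{i=0}^{N_t−1} ⟨h_r^{(i)}, h_s^{(i)}⟩, and the empirical estimator M̂_𝒟 with entries (M̂_𝒟)_{(r,r)} := (1/N_t) Σ_i ⟨h̃_r^{(i)}, h̃_r^{(i)}⟩ − 2 m₁ ((1/N_t) Σ_i ⟨h̃_r^{(i)}, 𝟏⟩) + N_c (2 m₁² − m₂) on the diagonal, and (M̂_𝒟)_{(r,s)} := (1/N_t) Σ_i ⟨h̃_r^{(i)}, h̃_s^{(i)}⟩ − m₁ ((1/N_t) Σ_i ⟨h̃_r^{(i)} + h̃_s^{(i)}, 𝟏⟩)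 + N_c m₁² for r ≠ s. Then the estimator is unbiased entry-wise: E[(M̂_𝒟)_{(r,s)}] = (M_𝒟)_{(r,s)} for all r, s. -/
open MeasureTheory ProbabilityTheory Matrix

private lemma memLp_mul_integrable {Ω : Type*} [MeasureSpace Ω] {X Y : Ω → ℝ}
    (hX : MemLp X 2) (hY : MemLp Y 2) : Integrable (fun ω => X ω * Y ω) := by
  have h1 := (hX.add hY).integrable_sq
  have h2 := hX.integrable_sq
  have h3 := hY.integrable_sq
  have he : (fun ω => X ω * Y ω) = fun ω => ((X ω + Y ω) ^ 2 - X ω ^ 2 - Y ω ^ 2) / 2 := by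
    funext ω; ring
  rw [he]
  exact ((h1.sub h2).sub h3).div_const 2

private lemma aux_int_mul {Ω : Type*} [MeasureSpace Ω] [IsProbabilityMeasure (ℙ : Measure Ω)]
    (m₁ c a b : ℝ) {X Y : Ω → ℝ} (hX : MemLp X 2) (hY : MemLp Y 2)
    (hmX : (∫ ω, X ω) = m₁) (hmY : (∫ ω, Y ω) = m₁) (hc : (∫ ω, X ω * Y ω) = c) :
    (∫ ω, (a + X ω) * (b + Y ω)) = a * b + a * m₁ + m₁ * b + c := by
  have hXi : Integrable X := hX.integrable one_le_two
  have hYi : Integrable Y := hY.integrable one_le_two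
  have he : (fun ω => (a + X ω) * (b + Y ω))
      = fun ω => (a * b + a * Y ω) + (X ω * b + X ω * Y ω) := by funext ω; ring
  have i1 : Integrable (fun ω => a * b + a * Y ω) := (integrable_const _).add (hYi.const_mul a)
  have i2 : Integrable (fun ω => X ω * b + X ω * Y ω) :=
    (hXi.mul_const b).add (memLp_mul_integrable hX hY)
  rw [he, integral_add i1 i2,
    integral_add (integrable_const _) (hYi.const_mul a),
    integral_add (hXi.mul_const b) (memLp_mul_integrable hX hY),
    integral_const, integral_const_mul, integral_mul_const, hmX, hmY, hc]
  simp only [measure_univ, probReal_univ, ENNReal.toReal_one, one_smul]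
  ring

/-- **Unbiasedness of the empirical estimator `M̂_𝒟`.** Given deterministic rows
`h_r⁽ⁱ⁾` and noisy rows `h̃_r⁽ⁱ⁾ = h_r⁽ⁱ⁾ + η_r⁽ⁱ⁾`, where every noise entry has
expectation `m₁` and second moment `m₂`, and for `r ≠ s` the entries `η_{r,k}⁽ⁱ⁾`
and `η_{s,k}⁽ⁱ⁾` are coordinatewise independent, the moment-corrected empirical
estimator is entry-wise unbiased for `(M_𝒟)_{(r,s)} = (1/N_t) ∑ᵢ ⟨h_r⁽ⁱ⁾, h_s⁽ⁱ⁾⟩`. -/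
theorem statement9 {Ω : Type*} [MeasureSpace Ω] [IsProbabilityMeasure (ℙ : Measure Ω)]
    {d Nt Nc : ℕ} (hNt : 0 < Nt) (m₁ m₂ : ℝ)
    (h : Fin Nt → Fin d → Fin Nc → ℝ) (η : Fin Nt → Fin d → Ω → Fin Nc → ℝ)
    (hL2 : ∀ i r k, MemLp (fun ω => η i r ω k) 2)
    (hmean : ∀ i r k, (∫ ω, η i r ω k) = m₁)
    (hm2 : ∀ i r k, (∫ ω, (η i r ω k) ^ 2) = m₂)
    (hindep : ∀ i (r s : Fin d), r ≠ s →
      ∀ k, IndepFun (fun ω => η i r ω k) (fun ω => η i s ω k))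
    (r s : Fin d) :
    (∫ ω,
      (if r = s then
        (1 / (Nt : ℝ)) * ∑ i, (h i r + η i r ω) ⬝ᵥ (h i r + η i r ω)
          - 2 * m₁ * ((1 / (Nt : ℝ)) * ∑ i, (h i r + η i r ω) ⬝ᵥ (fun _ => (1 : ℝ)))
          + Nc * (2 * m₁ ^ 2 - m₂)
      else
        (1 / (Nt : ℝ)) * ∑ i, (h i r + η i r ω) ⬝ᵥ (h i s + η i s ω)
          - m₁ * ((1 / (Nt : ℝ)) *
              ∑ i, ((h i r + η i r ω) + (h i s + η i s ω)) ⬝ᵥ (fun _ => (1 : ℝ)))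
          + Nc * m₁ ^ 2)) =
      (1 / (Nt : ℝ)) * ∑ i, h i r ⬝ᵥ h i s := by
  have hNt' : (Nt : ℝ) ≠ 0 := Nat.cast_ne_zero.mpr hNt.ne'
  have hηL1 : ∀ i r k, Integrable (fun ω => η i r ω k) :=
    fun i r k => (hL2 i r k).integrable one_le_two
  -- integrability of the dot products
  have hmul_int : ∀ (i : Fin Nt) (r s : Fin d) (k : Fin Nc) (a b : ℝ),
      Integrable (fun ω => (a + η i r ω k) * (b + η i s ω k)) := fun i r s k a b =>
    memLp_mul_integrable ((memLp_const a).add (hL2 i r k)) ((memLp_const b).add (hL2 i s k))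
  have hdot_int : ∀ (i : Fin Nt) (r s : Fin d),
      Integrable (fun ω => (h i r + η i r ω) ⬝ᵥ (h i s + η i s ω)) := by
    intro i r s
    simp only [dotProduct, Pi.add_apply]
    exact integrable_finset_sum _ fun k _ => hmul_int i r s k (h i r k) (h i s k)
  have hone_int : ∀ (i : Fin Nt) (r : Fin d),
      Integrable (fun ω => (h i r + η i r ω) ⬝ᵥ (fun _ => (1 : ℝ))) := by
    intro i r
    simp only [dotProduct, Pi.add_apply, mul_one]
    exact integrable_finset_sum _ fun k _ => (integrable_const _).add (hηL1 i r k)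
  -- value of the dot-product integrals
  have hdot_val : ∀ (i : Fin Nt) (r s : Fin d) (c : ℝ),
      (∀ k, (∫ ω, η i r ω k * η i s ω k) = c) →
      (∫ ω, (h i r + η i r ω) ⬝ᵥ (h i s + η i s ω))
        = h i r ⬝ᵥ h i s + m₁ * (∑ k, h i s k) + m₁ * (∑ k, h i r k) + Nc * c := by
    intro i r s c hc
    simp only [dotProduct, Pi.add_apply]
    rw [integral_finset_sum _ fun k _ => hmul_int i r s k (h i r k) (h i s k)]
    have hk : ∀ k : Fin Nc, (∫ ω, (h i r k + η i r ω k) * (h i s k + η i s ω k))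
        = h i r k * h i s k + h i r k * m₁ + m₁ * h i s k + c := fun k =>
      aux_int_mul m₁ c _ _ (hL2 i r k) (hL2 i s k) (hmean i r k) (hmean i s k) (hc k)
    rw [Finset.sum_congr rfl fun k _ => hk k]
    simp only [Finset.sum_add_distrib, Finset.sum_const, Finset.card_univ, Fintype.card_fin,
      nsmul_eq_mul, ← Finset.sum_mul, ← Finset.mul_sum]
    ring
  have hone_val : ∀ (i : Fin Nt) (r : Fin d),
      (∫ ω, (h i r + η i r ω) ⬝ᵥ (fun _ => (1 : ℝ))) = (∑ k, h i r k) + Nc * m₁ := by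
    intro i r
    simp only [dotProduct, Pi.add_apply, mul_one]
    have ik : ∀ k : Fin Nc, Integrable (fun ω => h i r k + η i r ω k) :=
      fun k => (integrable_const _).add (hηL1 i r k)
    rw [integral_finset_sum _ fun k _ => ik k]
    have hk : ∀ k : Fin Nc, (∫ ω, (h i r k + η i r ω k)) = h i r k + m₁ := by
      intro k
      rw [integral_add (integrable_const _) (hηL1 i r k), integral_const, hmean i r k]
      simp
    rw [Finset.sum_congr rfl fun k _ => hk k]
    simp [Finset.sum_add_distrib, Finset.card_univ]
  by_cases hrs : r = s
  · subst hrs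
    simp only [eq_self_iff_true, if_true]
    have hη2 : ∀ i k, (∫ ω, η i r ω k * η i r ω k) = m₂ := by
      intro i k
      have := hm2 i r k
      simpa [sq] using this
    have int1 : Integrable (fun ω =>
        (1 / (Nt : ℝ)) * ∑ i, (h i r + η i r ω) ⬝ᵥ (h i r + η i r ω)) :=
      (integrable_finset_sum _ fun i _ => hdot_int i r r).const_mul _
    have int2 : Integrable (fun ω =>
        2 * m₁ * ((1 / (Nt : ℝ)) * ∑ i, (h i r + η i r ω) ⬝ᵥ (fun _ => (1 : ℝ)))) :=
      (((integrable_finset_sum _ fun i _ => hone_int i r).const_mul _).const_mul _)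
    have intsub : Integrable (fun ω =>
        (1 / (Nt : ℝ)) * ∑ i, (h i r + η i r ω) ⬝ᵥ (h i r + η i r ω)
          - 2 * m₁ * ((1 / (Nt : ℝ)) * ∑ i, (h i r + η i r ω) ⬝ᵥ (fun _ => (1 : ℝ)))) :=
      int1.sub int2
    rw [integral_add intsub (integrable_const _), integral_sub int1 int2,
      integral_const, integral_const_mul, integral_const_mul, integral_const_mul,
      integral_finset_sum _ fun i _ => hdot_int i r r,
      integral_finset_sum _ fun i _ => hone_int i r]
    rw [Finset.sum_congr rfl fun i _ => hdot_val i r r m₂ (hη2 i),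
      Finset.sum_congr rfl fun i _ => hone_val i r]
    simp only [Finset.sum_add_distrib, Finset.sum_const, Finset.card_univ, Fintype.card_fin,
      nsmul_eq_mul, smul_eq_mul, measure_univ, probReal_univ, ENNReal.toReal_one, one_mul]
    field_simp
    simp only [← Finset.mul_sum]
    ring
  · simp only [if_neg hrs]
    have hη2 : ∀ i k, (∫ ω, η i r ω k * η i s ω k) = m₁ * m₁ := by
      intro i k
      have hmu := (hindep i r s hrs k).integral_mul_eq_mul_integral (hηL1 i r k).aestronglyMeasurable
        (hηL1 i s k).aestronglyMeasurable
      have hfg : (fun ω => η i r ω k * η i s ω k)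
          = (fun ω => η i r ω k) * (fun ω => η i s ω k) := rfl
      rw [hfg, hmu, hmean i r k, hmean i s k]
    have int1 : Integrable (fun ω =>
        (1 / (Nt : ℝ)) * ∑ i, (h i r + η i r ω) ⬝ᵥ (h i s + η i s ω)) :=
      (integrable_finset_sum _ fun i _ => hdot_int i r s).const_mul _
    have hsum_eq : ∀ (ω : Ω) (i : Fin Nt),
        ((h i r + η i r ω) + (h i s + η i s ω)) ⬝ᵥ (fun _ => (1 : ℝ))
          = (h i r + η i r ω) ⬝ᵥ (fun _ => (1 : ℝ))
            + (h i s + η i s ω) ⬝ᵥ (fun _ => (1 : ℝ)) := by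
      intro ω i
      simp [dotProduct, Pi.add_apply, Finset.sum_add_distrib]
    simp only [hsum_eq]
    have int2 : Integrable (fun ω => m₁ * ((1 / (Nt : ℝ)) *
        ∑ i, ((h i r + η i r ω) ⬝ᵥ (fun _ => (1 : ℝ))
          + (h i s + η i s ω) ⬝ᵥ (fun _ => (1 : ℝ))))) :=
      ((integrable_finset_sum _ fun i _ =>
        (hone_int i r).add (hone_int i s)).const_mul _).const_mul _
    have intadd : ∀ i : Fin Nt, Integrable (fun ω =>
        (h i r + η i r ω) ⬝ᵥ (fun _ => (1 : ℝ)) + (h i s + η i s ω) ⬝ᵥ (fun _ => (1 : ℝ))) :=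
      fun i => (hone_int i r).add (hone_int i s)
    have intsub : Integrable (fun ω =>
        (1 / (Nt : ℝ)) * ∑ i, (h i r + η i r ω) ⬝ᵥ (h i s + η i s ω)
          - m₁ * ((1 / (Nt : ℝ)) * ∑ i, ((h i r + η i r ω) ⬝ᵥ (fun _ => (1 : ℝ))
              + (h i s + η i s ω) ⬝ᵥ (fun _ => (1 : ℝ))))) :=
      int1.sub int2
    rw [integral_add intsub (integrable_const _), integral_sub int1 int2,
      integral_const, integral_const_mul, integral_const_mul, integral_const_mul,
      integral_finset_sum _ fun i _ => hdot_int i r s,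
      integral_finset_sum _ fun i _ => intadd i]
    have honeadd : ∀ i : Fin Nt,
        (∫ ω, ((h i r + η i r ω) ⬝ᵥ (fun _ => (1 : ℝ))
            + (h i s + η i s ω) ⬝ᵥ (fun _ => (1 : ℝ))))
          = ((∑ k, h i r k) + Nc * m₁) + ((∑ k, h i s k) + Nc * m₁) := by
      intro i
      rw [integral_add (hone_int i r) (hone_int i s), hone_val i r, hone_val i s]
    rw [Finset.sum_congr rfl fun i _ => hdot_val i r s (m₁ * m₁) (hη2 i),
      Finset.sum_congr rfl fun i _ => honeadd i]
    simp only [Finset.sum_add_distrib, Finset.sum_const, Finset.card_univ, Fintype.card_fin,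
      nsmul_eq_mul, smul_eq_mul, measure_univ, probReal_univ, ENNReal.toReal_one, one_mul]
    field_simp
    simp only [← Finset.mul_sum]
    ring
end

section
/- Let (X_i)_{i=1}^∞ be a sequence of independent, square-integrable real random variables on a probability space such that Σ_{i=1}^∞ Var(X_i)/i² < ∞. Then (1/n) Σ_{i=1}^n (X_i − E[X_i]) → 0 almost surely as n → ∞ (Kolmogorov's strong law of large numbers for independent, not necessarily identically distributed, random variables). -/
open MeasureTheory ProbabilityTheory Filter

lemma my_iIndepFun_ae_eq {Ω : Type*} [MeasurableSpace Ω] {μ : Measure Ω}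
    {f g : ℕ → Ω → ℝ} (h : iIndepFun f μ)
    (hfg : ∀ i, f i =ᵐ[μ] g i) : iIndepFun g μ := by
  rw [iIndepFun_iff_measure_inter_preimage_eq_mul] at h ⊢
  intro S sets hsets
  have hall : ∀ᵐ ω ∂μ, ∀ i, f i ω = g i ω := ae_all_iff.2 hfg
  have h1 : ∀ i : ℕ, μ (g i ⁻¹' sets i) = μ (f i ⁻¹' sets i) := by
    intro i
    apply measure_congr
    rw [Filter.eventuallyEq_set]
    filter_upwards [hfg i] with ω hω
    simp [Set.mem_preimage, hω]
  have h2 : μ (⋂ i ∈ S, g i ⁻¹' sets i) = μ (⋂ i ∈ S, f i ⁻¹' sets i) := by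
    apply measure_congr
    rw [Filter.eventuallyEq_set]
    filter_upwards [hall] with ω hω
    simp only [Set.mem_iInter, Set.mem_preimage]
    constructor <;> intro H i hi
    · rw [hω i]; exact H i hi
    · rw [← hω i]; exact H i hi
  rw [h2, h S hsets]
  exact Finset.prod_congr rfl fun i _ => (h1 i).symm

lemma my_kronecker {a : ℕ → ℝ} {s : ℝ}
    (h : Tendsto (fun n => ∑ i ∈ Finset.range n, a i / ((i : ℝ) + 1)) atTop (nhds s)) :
    Tendsto (fun n : ℕ => (1 / (n : ℝ)) * ∑ i ∈ Finset.range n, a i) atTop (nhds 0) := by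
  set u : ℕ → ℝ := fun n => ∑ i ∈ Finset.range n, a i / ((i : ℝ) + 1) with hu
  have key : ∀ n : ℕ, ∑ i ∈ Finset.range n, a i
      = (n : ℝ) * u n - ∑ i ∈ Finset.range n, u i := by
    intro n
    induction n with
    | zero => simp [hu]
    | succ n ih =>
      have h1 : u (n + 1) = u n + a n / ((n : ℝ) + 1) := Finset.sum_range_succ _ n
      rw [Finset.sum_range_succ, ih, Finset.sum_range_succ, h1]
      have hn : ((n : ℝ) + 1) ≠ 0 := by positivity
      push_cast
      field_simp
      ring
  have hces : Tendsto (fun n : ℕ => (n : ℝ)⁻¹ * ∑ i ∈ Finset.range n, u i) atTop (nhds s) :=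
    h.cesaro
  have hsub := h.sub hces
  rw [sub_self] at hsub
  apply hsub.congr'
  filter_upwards [Filter.eventually_ge_atTop 1] with n hn
  have hn' : (n : ℝ) ≠ 0 := (Nat.cast_pos.2 hn).ne'
  rw [key n]
  field_simp

lemma my_variance_congr {Ω : Type*} [MeasurableSpace Ω] {μ : Measure Ω} {f g : Ω → ℝ}
    (h : f =ᵐ[μ] g) : variance f μ = variance g μ := by
  have hint : μ[f] = μ[g] := integral_congr_ae h
  have hev : evariance f μ = evariance g μ := by
    rw [evariance, evariance, hint]
    apply lintegral_congr_ae
    filter_upwards [h] with ω hω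
    rw [hω]
  rw [variance, variance, hev]

lemma my_variance_sub_const {Ω : Type*} [MeasurableSpace Ω] {μ : Measure Ω}
    [IsProbabilityMeasure μ] {f : Ω → ℝ} (hf : Integrable f μ) (c : ℝ) :
    variance (fun ω => f ω - c) μ = variance f μ := by
  have h : μ[fun ω => f ω - c] = μ[f] - c := by
    rw [integral_sub hf (integrable_const c), integral_const]
    simp [measure_univ]
  have hev : evariance (fun ω => f ω - c) μ = evariance f μ := by
    rw [evariance, evariance, h]
    apply lintegral_congr
    intro ω
    rw [sub_sub_sub_cancel_right]
  rw [variance, variance, hev]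

/-- **Kolmogorov's strong law of large numbers** for independent (not necessarily
identically distributed) square-integrable random variables `(X_i)_{i=1}^∞` with
`∑ Var(X_i)/i² < ∞`: the centered averages `(1/n) ∑_{i=1}^n (X_i − E[X_i])`
converge to `0` almost surely. (Here `X i` plays the role of `X_{i+1}`.) -/
theorem statement10 {Ω : Type*} [MeasureSpace Ω] [IsProbabilityMeasure (ℙ : Measure Ω)]
    (X : ℕ → Ω → ℝ)
    (hindep : iIndepFun (fun i : ℕ => X (i + 1)))
    (hL2 : ∀ i, MemLp (X i) 2)
    (hvar : Summable fun i : ℕ => variance (X (i + 1)) ℙ / ((i : ℝ) + 1) ^ 2) :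
    ∀ᵐ ω, Tendsto
      (fun n : ℕ => (1 / (n : ℝ)) * ∑ i ∈ Finset.range n, (X (i + 1) ω - ∫ ω', X (i + 1) ω'))
      atTop (nhds 0) := by
  set c : ℕ → ℝ := fun i => ∫ ω', X (i + 1) ω' with hc
  have hmX : ∀ i, AEStronglyMeasurable (X i) ℙ := fun i => (hL2 i).1
  set X' : ℕ → Ω → ℝ := fun i => (hmX i).mk (X i) with hX'
  have hX'sm : ∀ i, StronglyMeasurable (X' i) := fun i => (hmX i).stronglyMeasurable_mk
  have hX'ae : ∀ i, X i =ᵐ[ℙ] X' i := fun i => (hmX i).ae_eq_mk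
  have hX'L2 : ∀ i, MemLp (X' i) 2 ℙ := fun i => (hL2 i).ae_eq (hX'ae i)
  set Y : ℕ → Ω → ℝ := fun i ω => ((i : ℝ) + 1)⁻¹ * (X' (i + 1) ω - c i) with hY
  have hYsm : ∀ i, StronglyMeasurable (Y i) := fun i =>
    stronglyMeasurable_const.mul ((hX'sm (i + 1)).sub stronglyMeasurable_const)
  have hYL2 : ∀ i, MemLp (Y i) 2 ℙ := fun i =>
    ((hX'L2 (i + 1)).sub (memLp_const _)).const_mul _
  have hYint : ∀ i, Integrable (Y i) ℙ := fun i => (hYL2 i).integrable one_le_two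
  have hX'int : ∀ i, Integrable (X' i) ℙ := fun i => (hX'L2 i).integrable one_le_two
  have hcX' : ∀ i, ∫ ω, X' (i + 1) ω = c i := fun i => (integral_congr_ae (hX'ae (i + 1))).symm
  have hYmean : ∀ i, ∫ ω, Y i ω = 0 := by
    intro i
    rw [hY]
    simp only
    rw [integral_const_mul, integral_sub (hX'int (i + 1)) (integrable_const _), integral_const]
    simp [measure_univ, hcX' i]
  have hX'indep : iIndepFun (fun i => X' (i + 1)) ℙ :=
    my_iIndepFun_ae_eq hindep (fun i => hX'ae (i + 1))
  have hYindep : iIndepFun Y ℙ := by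
    have := hX'indep.comp (fun i x => ((i : ℝ) + 1)⁻¹ * (x - c i))
      (fun i => (measurable_id.sub_const _).const_mul _)
    exact this
  have hvY : ∀ i, variance (Y i) ℙ = variance (X (i + 1)) ℙ / ((i : ℝ) + 1) ^ 2 := by
    intro i
    have h1 : variance (Y i) ℙ
        = (((i : ℝ) + 1)⁻¹) ^ 2 * variance (fun ω => X' (i + 1) ω - c i) ℙ :=
      variance_const_mul _ _ _
    rw [h1, my_variance_sub_const (hX'int (i + 1)) (c i),
      my_variance_congr (hX'ae (i + 1)).symm]
    rw [div_eq_mul_inv, mul_comm, inv_pow]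
  -- the martingale of partial sums
  set f : ℕ → Ω → ℝ := fun n ω => ∑ i ∈ Finset.range (n + 1), Y i ω with hf
  have hfsum : ∀ n, f n = ∑ i ∈ Finset.range (n + 1), Y i := by
    intro n; funext ω; simp [hf, Finset.sum_apply]
  set ℱ := Filtration.natural Y hYsm with hℱ
  have hadp : StronglyAdapted ℱ f := by
    intro n
    apply Finset.stronglyMeasurable_fun_sum
    intro i hi
    exact (Filtration.stronglyAdapted_natural hYsm i).mono
      (ℱ.mono (Nat.lt_succ_iff.1 (Finset.mem_range.1 hi)))
  have hint : ∀ n, Integrable (f n) ℙ := fun n =>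
    integrable_finset_sum _ (fun i _ => hYint i)
  have hfL2 : ∀ n, MemLp (f n) 2 ℙ := by
    intro n
    rw [hfsum n]
    exact memLp_finset_sum' _ (fun i _ => hYL2 i)
  have hsucc : ∀ n, f (n + 1) = f n + Y (n + 1) := by
    intro n; funext ω
    simp only [hf, Pi.add_apply]
    exact Finset.sum_range_succ _ _
  have hmart : Martingale f ℱ ℙ := by
    refine martingale_nat hadp hint ?_
    intro n
    rw [hsucc n]
    refine EventuallyEq.symm ((condExp_add (hint n) (hYint (n + 1)) _).trans ?_)
    have e1 : ℙ[f n|ℱ n] = f n :=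
      condExp_of_stronglyMeasurable (ℱ.le n) (hadp n) (hint n)
    have e2 : ℙ[Y (n + 1)|ℱ n] =ᵐ[ℙ] fun _ => ℙ[Y (n + 1)] :=
      iIndepFun.condExp_natural_ae_eq_of_lt hYsm hYindep (Nat.lt_succ_self n)
    rw [e1]
    filter_upwards [e2] with ω hω
    simp only [Pi.add_apply, hω, hYmean (n + 1), add_zero]
  -- mean zero and variance bound
  have hfmean : ∀ n, ℙ[f n] = 0 := by
    intro n
    have h0 : (∫ ω, ∑ i ∈ Finset.range (n + 1), Y i ω) = 0 := by
      rw [integral_finset_sum _ (fun i _ => hYint i)]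
      simp [hYmean]
    exact h0
  set V : ℝ := ∑' i, variance (X (i + 1)) ℙ / ((i : ℝ) + 1) ^ 2 with hV
  have hterm_nn : ∀ i : ℕ, 0 ≤ variance (X (i + 1)) ℙ / ((i : ℝ) + 1) ^ 2 := fun i =>
    div_nonneg (variance_nonneg _ _) (by positivity)
  have hfvar : ∀ n, variance (f n) ℙ ≤ V := by
    intro n
    have hpair : Set.Pairwise ↑(Finset.range (n + 1))
        (fun i j => IndepFun (Y i) (Y j) ℙ) := fun i _ j _ hij => hYindep.indepFun hij
    have h1 : variance (f n) ℙ = ∑ i ∈ Finset.range (n + 1), variance (Y i) ℙ := by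
      rw [hfsum n]
      exact IndepFun.variance_sum (fun i _ => hYL2 i) hpair
    rw [h1]
    calc ∑ i ∈ Finset.range (n + 1), variance (Y i) ℙ
        = ∑ i ∈ Finset.range (n + 1), variance (X (i + 1)) ℙ / ((i : ℝ) + 1) ^ 2 :=
          Finset.sum_congr rfl fun i _ => hvY i
      _ ≤ V := hvar.sum_le_tsum _ (fun i _ => hterm_nn i)
  -- L¹ boundedness
  have hbdd : ∀ n, eLpNorm (f n) 1 ℙ ≤ ENNReal.ofReal V ^ ((1 : ℝ) / 2) := by
    intro n
    refine le_trans (eLpNorm_le_eLpNorm_of_exponent_le one_le_two (hfL2 n).1) ?_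
    have e1 : eLpNorm (f n) 2 ℙ = evariance (f n) ℙ ^ ((1 : ℝ) / 2) := by
      rw [eLpNorm_eq_lintegral_rpow_enorm_toReal two_ne_zero ENNReal.ofNat_ne_top,
        evariance_def' (hfL2 n).1, hfmean n]
      simp only [ne_eq, OfNat.ofNat_ne_zero, not_false_eq_true, zero_pow, ENNReal.ofReal_zero,
        tsub_zero, ENNReal.toReal_ofNat]
      congr 1
      apply lintegral_congr
      intro ω
      simp
    rw [e1]
    apply ENNReal.rpow_le_rpow _ (by norm_num)
    rw [← (hfL2 n).ofReal_variance_eq]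
    exact ENNReal.ofReal_le_ofReal (hfvar n)
  have hRne : ENNReal.ofReal V ^ ((1 : ℝ) / 2) ≠ ⊤ :=
    ENNReal.rpow_ne_top_of_nonneg (by norm_num) ENNReal.ofReal_ne_top
  set R : NNReal := (ENNReal.ofReal V ^ ((1 : ℝ) / 2)).toNNReal with hR
  have hRcoe : (R : ENNReal) = ENNReal.ofReal V ^ ((1 : ℝ) / 2) := ENNReal.coe_toNNReal hRne
  have hbdd' : ∀ n, eLpNorm (f n) 1 ℙ ≤ R := fun n => by rw [hRcoe]; exact hbdd n
  have hconv := hmart.submartingale.exists_ae_tendsto_of_bdd hbdd'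
  -- conclude
  have hXeq : ∀ᵐ ω ∂(ℙ : Measure Ω), ∀ i, X i ω = X' i ω := ae_all_iff.2 hX'ae
  filter_upwards [hconv, hXeq] with ω hω hXω
  obtain ⟨l, hl⟩ := hω
  have hg : Tendsto (fun n : ℕ => ∑ i ∈ Finset.range n,
      (X (i + 1) ω - c i) / ((i : ℝ) + 1)) atTop (nhds l) := by
    have h1 : ∀ n : ℕ, f n ω = ∑ i ∈ Finset.range (n + 1),
        (X (i + 1) ω - c i) / ((i : ℝ) + 1) := by
      intro n
      apply Finset.sum_congr rfl
      intro i _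
      rw [hY]
      simp only
      rw [hXω (i + 1), div_eq_mul_inv, mul_comm]
    rw [← tendsto_add_atTop_iff_nat 1]
    apply hl.congr
    intro n
    exact h1 n
  exact my_kronecker hg
end
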